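/- Let ℓ = {x}×L ⊂ ℙ¹×ℙ² (under the Segre embedding into ℙ⁵), where L ⊂ ℙ² is a line, and let p = (a,b) with a ≠ x and b ∉ L. Then the linear span of {p} ∪ ℓ is a projective plane in ℙ⁵ whose intersection with the Segre variety equals exactly {p} ∪ ℓ. -/

import Mathlib

noncomputable section

abbrev V2 : Type := Fin 2 → ℂ
abbrev V3 : Type := Fin 3 → ℂ
abbrev V6 : Type := Fin 2 → Fin 3 → ℂ

/-- The Segre map on vector representatives: `(u, v) ↦ (uᵢ vⱼ)`. -/
def segre (u : V2) (v : V3) : V6 := fun i j => u i * v j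

/-- The Segre variety `ℙ¹ × ℙ² ⊆ ℙ⁵`. -/
def SegreVar : Set (Projectivization ℂ V6) :=
  {P | ∃ (u : V2) (v : V3) (h : segre u v ≠ 0), P = Projectivization.mk ℂ (segre u v) h}

/-- The projective linear subspace of `ℙ⁵` associated to a linear subspace of `ℂ⁶`. -/
def projSet (W : Submodule ℂ V6) : Set (Projectivization ℂ V6) :=
  {P | P.rep ∈ W}

/-- The linear span (on representatives) of a set of projective points. -/
def projSpan (A : Set (Projectivization ℂ V6)) : Submodule ℂ V6 :=
  Submodule.span ℂ (Projectivization.rep '' A)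

/-- for `ℓ = {x} × L` a bidegree `(0,1)` line on the Segre variety
(`L ⊆ ℙ²` a line) and `p = (a,b)` with `a ≠ x` and `b ∉ L`, the linear span of
`{p} ∪ ℓ` is a projective plane (a 3-dimensional linear subspace) whose
intersection with the Segre variety is exactly `{p} ∪ ℓ`. -/
lemma rep_eq_smul (v : V6) (h : v ≠ 0) :
    ∃ c : ℂ, c ≠ 0 ∧ (Projectivization.mk ℂ v h).rep = c • v := by
  have := Projectivization.mk_rep (Projectivization.mk ℂ v h)
  rw [Projectivization.mk_eq_mk_iff] at this
  obtain ⟨c, hc⟩ := this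
  exact ⟨(c : ℂ), c.ne_zero, by rw [← hc, Units.smul_def]⟩

def segreMap (x : V2) : V3 →ₗ[ℂ] V6 where
  toFun v := segre x v
  map_add' v w := by funext i j; simp [segre]; ring
  map_smul' c v := by funext i j; simp [segre]; ring

lemma segre_ne_zero {x : V2} {w : V3} (hx : x ≠ 0) (hw : w ≠ 0) : segre x w ≠ 0 := by
  obtain ⟨i, hi⟩ := Function.ne_iff.mp hx
  obtain ⟨j, hj⟩ := Function.ne_iff.mp hw
  intro h
  have := congrFun (congrFun h i) j
  simp only [segre, Pi.zero_apply, mul_eq_zero] at this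
  tauto

lemma segre_zero_right (u : V2) : segre u 0 = 0 := by funext i j; simp [segre]

theorem stmt1 (x : V2) (hx : x ≠ 0) (L : Submodule ℂ V3) (hL : Module.finrank ℂ L = 2)
    (a : V2) (ha : a ≠ 0) (b : V3) (hb : b ≠ 0)
    (hax : a ∉ Submodule.span ℂ {x})  -- `a ≠ x` as points of `ℙ¹`
    (hbL : b ∉ L)                      -- `b ∉ L` as points of `ℙ²`
    (hp : segre a b ≠ 0)
    (ℓ : Set (Projectivization ℂ V6))
    (hℓ : ℓ = {P | ∃ (w : V3) (h : segre x w ≠ 0),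
            w ∈ L ∧ P = Projectivization.mk ℂ (segre x w) h}) :
    Module.finrank ℂ
        (projSpan (insert (Projectivization.mk ℂ (segre a b) hp) ℓ)) = 3 ∧
      SegreVar ∩ projSet (projSpan (insert (Projectivization.mk ℂ (segre a b) hp) ℓ)) =
        insert (Projectivization.mk ℂ (segre a b) hp) ℓ := by

  set p : Projectivization ℂ V6 := Projectivization.mk ℂ (segre a b) hp with hpdef
  set A : Set (Projectivization ℂ V6) := insert p ℓ with hA
  set W0 : Submodule ℂ V6 := Submodule.span ℂ {segre a b} ⊔ L.map (segreMap x) with hW0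
  -- determinant nonzero
  have hd : x 0 * a 1 - x 1 * a 0 ≠ 0 := by
    intro hd0
    apply hax
    have hcases : x 0 ≠ 0 ∨ x 1 ≠ 0 := by
      by_contra hcon
      push_neg at hcon
      exact hx (by funext i; fin_cases i <;> simp [hcon.1, hcon.2])
    rcases hcases with h0 | h1
    · refine Submodule.mem_span_singleton.mpr ⟨a 0 / x 0, ?_⟩
      funext i; fin_cases i
      · simp only [Pi.smul_apply, smul_eq_mul, Fin.zero_eta, Fin.mk_one]
        field_simp
      · simp only [Pi.smul_apply, smul_eq_mul, Fin.zero_eta, Fin.mk_one]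
        field_simp
        linear_combination -hd0
    · refine Submodule.mem_span_singleton.mpr ⟨a 1 / x 1, ?_⟩
      funext i; fin_cases i
      · simp only [Pi.smul_apply, smul_eq_mul, Fin.zero_eta, Fin.mk_one]
        field_simp
        linear_combination hd0
      · simp only [Pi.smul_apply, smul_eq_mul, Fin.zero_eta, Fin.mk_one]
        field_simp
  obtain ⟨jb, hjb⟩ := Function.ne_iff.mp hb
  simp only [Pi.zero_apply] at hjb
  -- projSpan = W0
  have hspan : projSpan A = W0 := by
    apply le_antisymm
    · rw [projSpan, Submodule.span_le]
      rintro _ ⟨P, hP, rfl⟩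
      rcases hP with rfl | hP
      · obtain ⟨c, hc0, hc⟩ := rep_eq_smul (segre a b) hp
        rw [hc]
        exact Submodule.smul_mem _ _
          (Submodule.mem_sup_left (Submodule.mem_span_singleton_self _))
      · rw [hℓ] at hP
        obtain ⟨w, h, hwL, rfl⟩ := hP
        obtain ⟨c, hc0, hc⟩ := rep_eq_smul (segre x w) h
        rw [hc]
        exact Submodule.smul_mem _ _ (Submodule.mem_sup_right ⟨w, hwL, rfl⟩)
    · rw [hW0]
      apply sup_le
      · rw [Submodule.span_le, Set.singleton_subset_iff]
        obtain ⟨c, hc0, hc⟩ := rep_eq_smul (segre a b) hp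
        have hmem : p.rep ∈ projSpan A :=
          Submodule.subset_span ⟨p, Set.mem_insert _ _, rfl⟩
        rw [hc] at hmem
        exact (Submodule.smul_mem_iff _ hc0).mp hmem
      · rintro _ ⟨w, hwL, rfl⟩
        by_cases hw0 : w = 0
        · subst hw0
          have : segreMap x 0 = 0 := map_zero _
          rw [this]; exact Submodule.zero_mem _
        · have h : segre x w ≠ 0 := segre_ne_zero hx hw0
          have hPin : Projectivization.mk ℂ (segre x w) h ∈ A := by
            right; rw [hℓ]; exact ⟨w, h, hwL, rfl⟩
          obtain ⟨c, hc0, hc⟩ := rep_eq_smul (segre x w) h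
          have hmem : (Projectivization.mk ℂ (segre x w) h).rep ∈ projSpan A :=
            Submodule.subset_span ⟨_, hPin, rfl⟩
          rw [hc] at hmem
          exact (Submodule.smul_mem_iff _ hc0).mp hmem
  -- injectivity of segreMap x
  have hinj : Function.Injective (segreMap x) := by
    rw [injective_iff_map_eq_zero]
    intro w hw
    obtain ⟨i, hi⟩ := Function.ne_iff.mp hx
    funext j
    have := congrFun (congrFun hw i) j
    simp only [segreMap, segre, LinearMap.coe_mk, AddHom.coe_mk, Pi.zero_apply,
      mul_eq_zero] at this ⊢
    tauto
  -- disjointness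
  have hdisj : Submodule.span ℂ {segre a b} ⊓ L.map (segreMap x) = ⊥ := by
    rw [eq_bot_iff]
    rintro M ⟨hM1, hM2⟩
    obtain ⟨α, rfl⟩ := Submodule.mem_span_singleton.mp hM1
    obtain ⟨w, hwL, hw⟩ := hM2
    have heq : ∀ i j, x i * w j = α * (a i * b j) := by
      intro i j
      have := congrFun (congrFun hw i) j
      simpa [segreMap, segre] using this
    have hα : α = 0 := by
      have h0 := heq 0 jb
      have h1 := heq 1 jb
      have : α * ((x 0 * a 1 - x 1 * a 0) * b jb) = 0 := by
        linear_combination x 1 * h0 - x 0 * h1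
      rcases mul_eq_zero.mp this with h | h
      · exact h
      · exact absurd h (mul_ne_zero hd hjb)
    rw [hα, zero_smul]
    exact Submodule.zero_mem ⊥
  have hrank : Module.finrank ℂ W0 = 3 := by
    have h1 : Module.finrank ℂ (Submodule.span ℂ {segre a b}) = 1 :=
      finrank_span_singleton hp
    have h2 : Module.finrank ℂ (L.map (segreMap x)) = 2 := by
      exact (LinearEquiv.finrank_eq (Submodule.equivMapOfInjective _ hinj L)).symm.trans hL
    have := Submodule.finrank_sup_add_finrank_inf_eq
      (Submodule.span ℂ {segre a b}) (L.map (segreMap x))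
    rw [hdisj, h1, h2, finrank_bot] at this
    rw [hW0]; omega
  refine ⟨by rw [hspan]; exact hrank, ?_⟩
  apply Set.eq_of_subset_of_subset
  · rintro P ⟨⟨u, v, h, rfl⟩, hPW⟩
    have hu0 : u ≠ 0 := by
      rintro rfl; apply h; funext i j; simp [segre]
    have hv0 : v ≠ 0 := by
      rintro rfl; apply h; funext i j; simp [segre]
    -- extract segre u v ∈ W0
    obtain ⟨c, hc0, hc⟩ := rep_eq_smul (segre u v) h
    rw [projSet, Set.mem_setOf_eq, hspan, hc] at hPW
    have hmem : segre u v ∈ W0 := (Submodule.smul_mem_iff _ hc0).mp hPW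
    rw [hW0] at hmem
    obtain ⟨y, hy, z, hz, hyz⟩ := Submodule.mem_sup.mp hmem
    obtain ⟨α, rfl⟩ := Submodule.mem_span_singleton.mp hy
    obtain ⟨w, hwL, rfl⟩ := hz
    have eqn : ∀ i j, α * (a i * b j) + x i * w j = u i * v j := by
      intro i j
      have := congrFun (congrFun hyz i) j
      simpa [segreMap, segre] using this
    by_cases ht : x 0 * u 1 - x 1 * u 0 = 0
    · -- P ∈ ℓ
      have hα : α = 0 := by
        have : α * ((x 0 * a 1 - x 1 * a 0) * b jb) = 0 := by
          linear_combination x 0 * eqn 1 jb - x 1 * eqn 0 jb + v jb * ht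
        rcases mul_eq_zero.mp this with h' | h'
        · exact h'
        · exact absurd h' (mul_ne_zero hd hjb)
      have hvec : segre u v = segre x w := by
        funext i j
        have := eqn i j
        rw [hα] at this
        simp only [segre]
        linear_combination -this
      right
      rw [hℓ]
      refine ⟨w, hvec ▸ h, hwL, ?_⟩
      rw [Projectivization.mk_eq_mk_iff]
      exact ⟨1, by rw [one_smul, hvec]⟩
    · -- P = p
      have hA' : ∀ j, (x 0 * u 1 - x 1 * u 0) * v j
          = (α * (x 0 * a 1 - x 1 * a 0)) * b j := by
        intro j
        linear_combination x 1 * eqn 0 j - x 0 * eqn 1 j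
      have hB' : ∀ j, (a 1 * u 0 - a 0 * u 1) * v j
          = (x 0 * a 1 - x 1 * a 0) * w j := by
        intro j
        linear_combination a 0 * eqn 1 j - a 1 * eqn 0 j
      have hα : α ≠ 0 := by
        rintro rfl
        apply hv0
        funext j
        have := hA' j
        simp only [zero_mul] at this
        exact (mul_eq_zero.mp this).resolve_left ht
      -- t' • w = (s' * α) • b
      have hwb : ∀ j, (x 0 * u 1 - x 1 * u 0) * w j
          = ((a 1 * u 0 - a 0 * u 1) * α) * b j := by
        intro j
        have key : (x 0 * a 1 - x 1 * a 0) * ((x 0 * u 1 - x 1 * u 0) * w j)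
            = (x 0 * a 1 - x 1 * a 0) * (((a 1 * u 0 - a 0 * u 1) * α) * b j) := by
          linear_combination (a 1 * u 0 - a 0 * u 1) * hA' j
            - (x 0 * u 1 - x 1 * u 0) * hB' j
        exact mul_left_cancel₀ hd key
      have hs : a 1 * u 0 - a 0 * u 1 = 0 := by
        by_contra hs
        apply hbL
        have hmemL : ((x 0 * u 1 - x 1 * u 0) • w : V3) ∈ L := L.smul_mem _ hwL
        have : (((a 1 * u 0 - a 0 * u 1) * α) • b : V3) ∈ L := by
          have hvec : ((x 0 * u 1 - x 1 * u 0) • w : V3)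
              = ((a 1 * u 0 - a 0 * u 1) * α) • b := by
            funext j; simpa using hwb j
          rwa [hvec] at hmemL
        have hne : (a 1 * u 0 - a 0 * u 1) * α ≠ 0 := mul_ne_zero hs hα
        have := L.smul_mem (((a 1 * u 0 - a 0 * u 1) * α)⁻¹) this
        rwa [← smul_assoc, smul_eq_mul, inv_mul_cancel₀ hne, one_smul] at this
      have hw0 : w = 0 := by
        funext j
        have := hwb j
        rw [hs] at this
        simp only [zero_mul] at this
        exact (mul_eq_zero.mp this).resolve_left ht
      left
      rw [hpdef, Projectivization.mk_eq_mk_iff]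
      refine ⟨Units.mk0 α hα, ?_⟩
      funext i j
      have := eqn i j
      rw [hw0] at this
      simp only [Pi.zero_apply, mul_zero, add_zero] at this
      simpa [segre, Units.smul_def] using this
  · intro P hP
    have hPA : P ∈ A := hP
    constructor
    · rcases hP with rfl | hP
      · exact ⟨a, b, hp, rfl⟩
      · rw [hℓ] at hP
        obtain ⟨w, h, hwL, rfl⟩ := hP
        exact ⟨x, w, h, rfl⟩
    · exact Submodule.subset_span ⟨P, hPA, rfl⟩
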